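/- Let n, d, k ≥ 1 and let 𝒳 be a finite family of distributions over {0,1}^n, each with min-entropy at least k. Then a uniformly random multilinear polynomial p of degree ≤ d over F_2 is non-constant on the support of every distribution in 𝒳 (i.e., is a disperser for 𝒳) with probability at least 1 − |𝒳| · 2^{1 − ∑_{i=0}^d C(k,i)}. -/

import Mathlib

open Finset

namespace Stmt17

/-- binary digit sum (popcount) -/
def pc (n : ℕ) : ℕ := (Nat.digits 2 n).sum

lemma pc_zero : pc 0 = 0 := by simp [pc]

lemma pc_rec (n : ℕ) : pc n = n % 2 + pc (n / 2) := by
  rcases Nat.eq_zero_or_pos n with h | h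
  · subst h; simp [pc]
  · unfold pc
    rw [Nat.digits_def' (by norm_num : (1:ℕ) < 2) h]
    simp [List.sum_cons]

lemma pc_pos {n : ℕ} (h : 0 < n) : 0 < pc n := by
  induction n using Nat.strong_induction_on with
  | _ n IH =>
    rw [pc_rec]
    rcases Nat.eq_zero_or_pos (n % 2) with h2 | h2
    · have hd : 0 < n / 2 := by omega
      have := IH (n / 2) (by omega) hd
      omega
    · omega

lemma pc_pow_add {m t : ℕ} (h : t < 2 ^ m) : pc (2 ^ m + t) = pc t + 1 := by
  induction m generalizing t with
  | zero =>
    interval_cases t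
    simp [pc]
  | succ m IH =>
    have h1 : (2 ^ (m + 1) + t) % 2 = t % 2 := by
      have : 2 ^ (m+1) = 2 * 2 ^ m := by ring
      omega
    have h2 : (2 ^ (m + 1) + t) / 2 = 2 ^ m + t / 2 := by
      have : 2 ^ (m+1) = 2 * 2 ^ m := by ring
      omega
    have h3 : t / 2 < 2 ^ m := by
      have : 2 ^ (m+1) = 2 * 2 ^ m := by ring
      omega
    rw [pc_rec, h1, h2, IH h3, pc_rec t]
    ring

/-- number of `t < m` with `pc t ≤ e` -/
def psi (e m : ℕ) : ℕ := ((range m).filter (fun t => pc t ≤ e)).card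

/-- number of `t ∈ [x, x+y)` with `pc t ≤ e` -/
def cnt (e x y : ℕ) : ℕ := ((Ico x (x + y)).filter (fun t => pc t ≤ e)).card

lemma psi_eq_cnt (e m : ℕ) : psi e m = cnt e 0 m := by
  unfold psi cnt
  rw [range_eq_Ico]
  norm_num

lemma cnt_add (e x y z : ℕ) : cnt e x (y + z) = cnt e x y + cnt e (x + y) z := by
  unfold cnt
  rw [← card_union_of_disjoint]
  · congr 1
    rw [← filter_union]
    congr 1
    rw [Finset.Ico_union_Ico_eq_Ico (by omega) (by omega)]
    congr 1; omega
  · exact disjoint_filter_filter (Finset.Ico_disjoint_Ico_consecutive _ _ _)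

lemma psi_add (e u v : ℕ) : psi e (u + v) = psi e u + cnt e u v := by
  rw [psi_eq_cnt, psi_eq_cnt, cnt_add]
  simp

lemma cnt_zero_len (e x : ℕ) : cnt e x 0 = 0 := by simp [cnt]

lemma psi_zero_m (e : ℕ) : psi e 0 = 0 := by simp [psi]

lemma cnt_mono_e {e e' : ℕ} (h : e ≤ e') (x y : ℕ) : cnt e x y ≤ cnt e' x y := by
  apply card_le_card
  intro t ht
  simp only [mem_filter] at *
  exact ⟨ht.1, le_trans ht.2 h⟩

lemma psi_mono_e {e e' : ℕ} (h : e ≤ e') (m : ℕ) : psi e m ≤ psi e' m := by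
  rw [psi_eq_cnt, psi_eq_cnt]; exact cnt_mono_e h 0 m

lemma psi_mono_m (e : ℕ) {m m' : ℕ} (h : m ≤ m') : psi e m ≤ psi e m' := by
  apply card_le_card
  intro t ht
  simp only [mem_filter, mem_range] at *
  omega

lemma cnt_le_len (e x y : ℕ) : cnt e x y ≤ y := by
  calc cnt e x y ≤ (Ico x (x+y)).card := card_le_card (filter_subset _ _)
  _ = y := by rw [Nat.card_Ico]; omega

lemma cnt0 {x : ℕ} (h : 1 ≤ x) {y : ℕ} : cnt 0 x y = 0 := by
  unfold cnt
  rw [Finset.card_eq_zero, filter_eq_empty_iff]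
  intro t ht
  simp only [mem_Ico] at ht
  have : 0 < pc t := pc_pos (by omega)
  omega

lemma psi_one {e : ℕ} : psi e 1 = 1 := by
  unfold psi
  rw [show range 1 = {0} from rfl]
  rw [filter_eq_self.2 (by intro t ht; simp at ht; subst ht; simp [pc_zero])]
  rfl

lemma psi_ge_one {e m : ℕ} (h : 1 ≤ m) : 1 ≤ psi e m := by
  calc 1 = psi e 1 := psi_one.symm
  _ ≤ psi e m := psi_mono_m e h

lemma psi0 {m : ℕ} (h : 1 ≤ m) : psi 0 m = 1 := by
  unfold psi
  rw [show (range m).filter (fun t => pc t ≤ 0) = {0} from ?_]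
  · rfl
  ext t
  simp only [mem_filter, mem_range, mem_singleton]
  constructor
  · rintro ⟨h1, h2⟩
    by_contra hne
    exact absurd h2 (by have := pc_pos (n := t) (by omega); omega)
  · rintro rfl; exact ⟨by omega, by simp [pc_zero]⟩

lemma psi1_ge_two {m : ℕ} (h : 2 ≤ m) : 2 ≤ psi 1 m := by
  have hsub : ({0, 1} : Finset ℕ) ⊆ (range m).filter (fun t => pc t ≤ 1) := by
    intro t ht
    simp only [mem_insert, mem_singleton] at ht
    rcases ht with rfl | rfl
    · simp only [mem_filter, mem_range]; exact ⟨by omega, by simp [pc_zero]⟩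
    · simp only [mem_filter, mem_range]
      refine ⟨by omega, ?_⟩
      have : pc 1 = 1 := by rw [pc_rec]; simp [pc_zero]
      omega
  calc 2 = ({0,1} : Finset ℕ).card := by rfl
  _ ≤ _ := card_le_card hsub
  _ = psi 1 m := rfl

/-- stripping the top bit -/
lemma cnt_strip {e m x y : ℕ} (h : x + y ≤ 2 ^ m) :
    cnt (e + 1) (2 ^ m + x) y = cnt e x y := by
  unfold cnt
  rw [show 2 ^ m + x + y = 2 ^ m + (x + y) by ring, ← Finset.map_add_left_Ico, filter_map,
    card_map]
  congr 1
  apply filter_congr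
  intro t ht
  simp only [mem_Ico] at ht
  have : pc (2 ^ m + t) = pc t + 1 := pc_pow_add (by omega)
  simp only [Function.comp, addLeftEmbedding_apply, this]
  constructor <;> intro hh <;> [omega; omega]

lemma psi_split {e m r : ℕ} (h : r ≤ 2 ^ m) :
    psi (e + 1) (2 ^ m + r) = psi (e + 1) (2 ^ m) + psi e r := by
  rw [psi_add]
  congr 1
  rw [psi_eq_cnt]
  calc cnt (e+1) (2^m) r = cnt (e+1) (2^m + 0) r := by norm_num
  _ = cnt e 0 r := cnt_strip (by omega)

lemma cnt_strip0 {e m y : ℕ} (h : y ≤ 2 ^ m) : cnt (e + 1) (2 ^ m) y = psi e y := by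
  rw [psi_eq_cnt]
  calc cnt (e+1) (2^m) y = cnt (e+1) (2^m + 0) y := by norm_num
  _ = cnt e 0 y := cnt_strip (by omega)

/-- count of exactly pc = r -/
def qc (r m : ℕ) : ℕ := ((range m).filter (fun t => pc t = r)).card

lemma psi_succ_qc (f m : ℕ) : psi (f + 1) m = psi f m + qc (f + 1) m := by
  unfold psi qc
  rw [← card_union_of_disjoint]
  · congr 1
    ext t
    simp only [mem_filter, mem_union, mem_range]
    omega
  · rw [Finset.disjoint_left]
    intro t ht1 ht2
    simp only [mem_filter, mem_range] at ht1 ht2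
    omega

lemma qc_mono {m m' : ℕ} (h : m ≤ m') (r : ℕ) : qc r m ≤ qc r m' := by
  apply card_le_card
  intro t ht
  simp only [mem_filter, mem_range] at *
  omega

/-- `w ≤ h → psi (f+1) w + psi f h ≤ psi f w + psi (f+2) h` -/
lemma termwise {f w h : ℕ} (hw : w ≤ h) :
    psi (f + 1) w + psi f h ≤ psi f w + psi (f + 2) h := by
  have e1 := psi_succ_qc f w
  have e2 := psi_succ_qc f h
  have e3 : psi (f+2) h = psi (f+1) h + qc (f+2) h := by
    have := psi_succ_qc (f+1) h
    convert this using 2 <;> omega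
  have e4 := qc_mono hw (f+1)
  omega


/-- master pack -/
def Pack (n : ℕ) : Prop :=
  (∀ d a b, 1 ≤ b → b ≤ a → a + b ≤ n → psi (d+1) (a+b) ≤ psi (d+1) a + psi d b)
  ∧ (∀ e x y, y ≤ x → x + y ≤ n → cnt e x y ≤ psi e y)
  ∧ (∀ e u v, u + v ≤ n → psi e u + psi e v ≤ psi (e+1) (u+v))
  ∧ (∀ e m L c, c + L ≤ 2^m → 2^m ≤ n → cnt e (2^m - L) L ≤ cnt e c L)

theorem pack (n : ℕ) : Pack n := by
  induction n using Nat.strong_induction_on with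
  | _ n IH =>
  -- derived helpers at totals < n
  have Sub : ∀ e x y, x + y < n → psi e (x+y) ≤ psi e x + psi e y := by
    intro e x y hlt
    rcases Nat.eq_zero_or_pos x with rfl | hx
    · simp
    rcases Nat.eq_zero_or_pos y with rfl | hy
    · simp
    rcases e with _ | e'
    · have h1 := psi0 hx
      have h2 := psi0 hy
      have h3 := psi0 (show 1 ≤ x + y by omega)
      omega
    rcases le_total y x with hyx | hxy
    · have := (IH _ hlt).1 e' x y hy hyx le_rfl
      have := psi_mono_e (show e' ≤ e' + 1 by omega) y
      omega
    · have := (IH _ hlt).1 e' y x hx hxy (by omega)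
      have := psi_mono_e (show e' ≤ e' + 1 by omega) x
      rw [add_comm x y]
      omega
  have Cg : ∀ e x y, x + y < n → cnt e x y ≤ psi e y := by
    intro e x y hlt
    rcases le_or_gt y x with hyx | hxy
    · exact (IH _ hlt).2.1 e x y hyx le_rfl
    · rcases Nat.eq_zero_or_pos x with rfl | hx
      · rw [← psi_eq_cnt]
      · have hid1 : cnt e x y = cnt e x (y - x) + cnt e y x := by
          have h := cnt_add e x (y - x) x
          rw [show (y - x) + x = y by omega] at h
          rw [show x + (y - x) = y by omega] at h
          exact h
        have hid2 : psi e y = psi e x + cnt e x (y - x) := by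
          have := psi_add e x (y - x)
          rw [show x + (y-x) = y by omega] at this
          exact this
        have h3 : cnt e y x ≤ psi e x := (IH _ hlt).2.1 e y x (by omega) (by omega)
        omega
  -- component M
  have compM : ∀ d a b, 1 ≤ b → b ≤ a → a + b ≤ n →
      psi (d+1) (a+b) ≤ psi (d+1) a + psi d b := by
    intro d a b hb hba hn'
    have hs2 : 2 ≤ a + b := by omega
    set s := a + b with hsdef
    set j := Nat.log 2 s with hjdef
    have hj1 : 1 ≤ j := by
      rw [hjdef]
      exact (Nat.le_log_iff_pow_le (by norm_num) (by omega)).2 (by simpa using hs2)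
    have hjs : 2^j ≤ s := Nat.pow_log_le_self 2 (by omega)
    have hsj : s < 2^(j+1) := Nat.lt_pow_succ_log_self (by norm_num) s
    obtain ⟨jj, hjj⟩ : ∃ jj, j = jj + 1 := ⟨j - 1, by omega⟩
    rw [hjj] at hjs hsj
    have hpow : (2:ℕ)^(jj+1) = 2^jj + 2^jj := by ring
    have hpow2 : (2:ℕ)^(jj+1+1) = 2^jj + 2^jj + 2^jj + 2^jj := by ring
    have hpos : (1:ℕ) ≤ 2^jj := Nat.one_le_two_pow
    have hsplit_s : psi (d+1) s = psi (d+1) (2^(jj+1)) + psi d (s - 2^(jj+1)) := by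
      have h1 : s - 2^(jj+1) ≤ 2^(jj+1) := by omega
      have := psi_split (e := d) (m := jj+1) (r := s - 2^(jj+1)) h1
      rw [show 2^(jj+1) + (s - 2^(jj+1)) = s by omega] at this
      exact this
    have hsplit_pow : psi (d+1) (2^(jj+1)) = psi (d+1) (2^jj) + psi d (2^jj) := by
      have := psi_split (e := d) (m := jj) (r := 2^jj) le_rfl
      rw [← hpow] at this
      exact this
    rcases le_or_gt (2^(jj+1)) a with hA | hB
    · -- case A : a ≥ 2^(j)
      have hsplit_a : psi (d+1) a = psi (d+1) (2^(jj+1)) + psi d (a - 2^(jj+1)) := by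
        have h1 : a - 2^(jj+1) ≤ 2^(jj+1) := by omega
        have := psi_split (e := d) (m := jj+1) (r := a - 2^(jj+1)) h1
        rw [show 2^(jj+1) + (a - 2^(jj+1)) = a by omega] at this
        exact this
      have hkey : psi d (s - 2^(jj+1)) ≤ psi d (a - 2^(jj+1)) + psi d b := by
        have := Sub d (a - 2^(jj+1)) b (by omega)
        rw [show (a - 2^(jj+1)) + b = s - 2^(jj+1) by omega] at this
        exact this
      omega
    · -- case B : 2^jj ≤ a < 2^(jj+1)
      have ha2 : 2^jj ≤ a := by omega
      have hsplit_a : psi (d+1) a = psi (d+1) (2^jj) + psi d (a - 2^jj) := by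
        have h1 : a - 2^jj ≤ 2^jj := by omega
        have := psi_split (e := d) (m := jj) (r := a - 2^jj) h1
        rw [show 2^jj + (a - 2^jj) = a by omega] at this
        exact this
      rcases le_or_gt (2^jj) b with hbB | hbS
      · -- b ≥ 2^jj
        rcases d with _ | d'
        · -- d = 0
          have hc1 : psi 0 (s - 2^(jj+1)) ≤ psi 0 (a - 2^jj) := by
            rcases Nat.eq_zero_or_pos (s - 2^(jj+1)) with hz | hz
            · rw [hz, psi_zero_m]; omega
            · have h1 : 1 ≤ a - 2^jj := by omega
              rw [psi0 hz, psi0 h1]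
          have := psi0 hb
          have := psi0 (show 1 ≤ (2:ℕ)^jj from hpos)
          omega
        · -- d = d'+1
          have hsplit_b : psi (d'+1) b = psi (d'+1) (2^jj) + psi d' (b - 2^jj) := by
            have h1 : b - 2^jj ≤ 2^jj := by omega
            have := psi_split (e := d') (m := jj) (r := b - 2^jj) h1
            rw [show 2^jj + (b - 2^jj) = b by omega] at this
            exact this
          have hkey : psi (d'+1) (s - 2^(jj+1)) ≤ psi (d'+1) (a - 2^jj) + psi d' (b - 2^jj) := by
            rcases Nat.eq_zero_or_pos (b - 2^jj) with hz | hz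
            · rw [hz, psi_zero_m, show s - 2^(jj+1) = (a - 2^jj) + 0 by omega]
              simp
            · have h0 := (IH (s - 2^(jj+1)) (by omega)).1 d' (a - 2^jj) (b - 2^jj) hz
                (by omega) (by omega)
              rw [show (a - 2^jj) + (b - 2^jj) = s - 2^(jj+1) by omega] at h0
              exact h0
          omega
      · -- b < 2^jj
        set c := s - 2^(jj+1) with hcdef
        set L := 2^jj - (a - 2^jj) with hLdef
        have hcb : c ≤ b := by omega
        have hbcL : b = c + L := by omega
        have hsplit_b2 : psi d b = psi d c + cnt d c L := by
          rw [hbcL, psi_add]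
        have hsplit_h2 : psi d (2^jj) = psi d (a - 2^jj) + cnt d (a - 2^jj) L := by
          have h0 := psi_add d (a - 2^jj) L
          rw [show (a - 2^jj) + L = 2^jj by omega] at h0
          exact h0
        have hF : cnt d (2^jj - L) L ≤ cnt d c L := by
          exact (IH (2^jj) (by omega)).2.2.2 d jj L c (by omega) le_rfl
        rw [show 2^jj - L = a - 2^jj by omega] at hF
        omega
  -- component C1
  have compC1 : ∀ e x y, y ≤ x → x + y ≤ n → cnt e x y ≤ psi e y := by
    intro e x y hyx hn'
    rcases Nat.eq_zero_or_pos y with rfl | hy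
    · rw [cnt_zero_len]; omega
    have hx : 1 ≤ x := by omega
    rcases e with _ | e'
    · have h0 : cnt 0 x y = 0 := cnt0 hx
      omega
    set j := Nat.log 2 x with hjdef
    have hjs : 2^j ≤ x := Nat.pow_log_le_self 2 (by omega)
    have hsj : x < 2^(j+1) := Nat.lt_pow_succ_log_self (by norm_num) x
    rcases le_or_gt (x + y) (2^(j+1)) with hcase | hcase
    · have hstrip : cnt (e'+1) x y = cnt e' (x - 2^j) y := by
        have := cnt_strip (e := e') (m := j) (x := x - 2^j) (y := y) (by omega)
        rw [show 2^j + (x - 2^j) = x by omega] at this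
        exact this
      have h2 := Cg e' (x - 2^j) y (by have := Nat.one_le_two_pow (n := j); omega)
      have h3 := psi_mono_e (show e' ≤ e' + 1 by omega) y
      omega
    · set y1 := 2^(j+1) - x with hy1def
      set c := x + y - 2^(j+1) with hcdef
      have hy1pos : 1 ≤ y1 := by omega
      have hcpos : 1 ≤ c := by omega
      have hy1c : y1 + c = y := by omega
      have hsplit : cnt (e'+1) x y = cnt (e'+1) x y1 + cnt (e'+1) (2^(j+1)) c := by
        have := cnt_add (e'+1) x y1 c
        rw [hy1c] at this
        rw [this, show x + y1 = 2^(j+1) by omega]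
      have hstrip1 : cnt (e'+1) x y1 = cnt e' (x - 2^j) y1 := by
        have := cnt_strip (e := e') (m := j) (x := x - 2^j) (y := y1) (by omega)
        rw [show 2^j + (x - 2^j) = x by omega] at this
        exact this
      have hstrip2 : cnt (e'+1) (2^(j+1)) c = psi e' c :=
        cnt_strip0 (by omega)
      have hb1 : cnt e' (x - 2^j) y1 ≤ psi e' y1 := by
        apply Cg
        have h1 : (x - 2^j) + y1 = 2^j := by omega
        have := Nat.one_le_two_pow (n := j)
        omega
      have hsup : psi e' y1 + psi e' c ≤ psi (e'+1) (y1 + c) :=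
        (IH y (by omega)).2.2.1 e' y1 c (by omega)
      rw [hy1c] at hsup
      omega
  -- component SUP (aux with v ≤ u)
  have compSUPaux : ∀ e u v, v ≤ u → u + v ≤ n → psi e u + psi e v ≤ psi (e+1) (u+v) := by
    intro e u v hvu hn'
    rcases Nat.eq_zero_or_pos v with rfl | hv
    · rw [psi_zero_m, add_zero, add_zero]
      exact psi_mono_e (by omega) u
    have hu : 1 ≤ u := by omega
    rcases e with _ | f
    · show psi 0 u + psi 0 v ≤ psi 1 (u+v)
      have h1 := psi0 hu
      have h2 := psi0 hv
      have h3 := psi1_ge_two (show 2 ≤ u + v by omega)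
      omega
    set s := u + v with hsdef
    have hs2 : 2 ≤ s := by omega
    set j := Nat.log 2 s with hjdef
    have hj1 : 1 ≤ j := by
      rw [hjdef]
      exact (Nat.le_log_iff_pow_le (by norm_num) (by omega)).2 (by simpa using hs2)
    have hjs : 2^j ≤ s := Nat.pow_log_le_self 2 (by omega)
    have hsj : s < 2^(j+1) := Nat.lt_pow_succ_log_self (by norm_num) s
    obtain ⟨jj, hjj⟩ : ∃ jj, j = jj + 1 := ⟨j - 1, by omega⟩
    rw [hjj] at hjs hsj
    have hpow : (2:ℕ)^(jj+1) = 2^jj + 2^jj := by ring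
    have hpow2 : (2:ℕ)^(jj+1+1) = 2^jj + 2^jj + 2^jj + 2^jj := by ring
    have hpos : (1:ℕ) ≤ 2^jj := Nat.one_le_two_pow
    have hu2 : 2^jj ≤ u := by omega
    have hsplit_s : psi (f+2) s = psi (f+2) (2^(jj+1)) + psi (f+1) (s - 2^(jj+1)) := by
      have := psi_split (e := f+1) (m := jj+1) (r := s - 2^(jj+1)) (by omega)
      rw [show 2^(jj+1) + (s - 2^(jj+1)) = s by omega] at this
      exact this
    have hsplit_pow : psi (f+2) (2^(jj+1)) = psi (f+2) (2^jj) + psi (f+1) (2^jj) := by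
      have := psi_split (e := f+1) (m := jj) (r := 2^jj) le_rfl
      rw [← hpow] at this
      exact this
    rcases lt_or_ge (2^(jj+1)) u with hbig | hule
    · -- case (b) : u > 2^(jj+1)
      set u2 := u - 2^(jj+1) with hu2def
      have hu2le : u2 ≤ 2^(jj+1) := by omega
      have hsplit_u : psi (f+1) u = psi (f+1) (2^(jj+1)) + psi f u2 := by
        have := psi_split (e := f) (m := jj+1) (r := u2) hu2le
        rw [show 2^(jj+1) + u2 = u by omega] at this
        exact this
      have hsplit_pow' : psi (f+1) (2^(jj+1)) = psi (f+1) (2^jj) + psi f (2^jj) := by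
        have := psi_split (e := f) (m := jj) (r := 2^jj) le_rfl
        rw [← hpow] at this
        exact this
      have hr : s - 2^(jj+1) = u2 + v := by omega
      rcases le_or_gt v (2^jj) with hvle | hvgt
      · -- v ≤ 2^jj
        have hsup' : psi f u2 + psi f v ≤ psi (f+1) (u2 + v) :=
          (IH (u2 + v) (by omega)).2.2.1 f u2 v (by omega)
        have hterm : psi (f+1) v + psi f (2^jj) ≤ psi f v + psi (f+2) (2^jj) :=
          termwise hvle
        rw [hsplit_s, hsplit_pow, hr]
        omega
      · -- v > 2^jj
        set vp := v - 2^jj with hvpdef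
        have hvple : vp ≤ 2^jj := by omega
        set w := u2 + vp with hwdef
        have hwle : w ≤ 2^jj := by omega
        have hsplit_v : psi (f+1) v = psi (f+1) (2^jj) + psi f vp := by
          have := psi_split (e := f) (m := jj) (r := vp) hvple
          rw [show 2^jj + vp = v by omega] at this
          exact this
        have hsplit_r : psi (f+1) (s - 2^(jj+1)) = psi (f+1) (2^jj) + psi f w := by
          have := psi_split (e := f) (m := jj) (r := w) hwle
          rw [show 2^jj + w = s - 2^(jj+1) by omega] at this
          exact this
        have hsup' : psi f u2 + psi f vp ≤ psi (f+1) w :=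
          (IH w (by omega)).2.2.1 f u2 vp le_rfl
        have hterm : psi (f+1) w + psi f (2^jj) ≤ psi f w + psi (f+2) (2^jj) :=
          termwise hwle
        rw [hsplit_s, hsplit_pow]
        omega
    · rcases le_or_gt v (2^jj) with hvle | hvgt
      · -- case (a) : u ≤ 2^(jj+1), v ≤ 2^jj
        set up := u - 2^jj with hupdef
        have huple : up ≤ 2^jj := by omega
        set cp := s - 2^(jj+1) with hcpdef
        have hcple : cp ≤ v := by omega
        have hvcp : v - cp = 2^jj - up := by omega
        have hsplit_u : psi (f+1) u = psi (f+1) (2^jj) + psi f up := by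
          have := psi_split (e := f) (m := jj) (r := up) huple
          rw [show 2^jj + up = u by omega] at this
          exact this
        have hsplit_v : psi (f+1) v = psi (f+1) cp + cnt (f+1) cp (2^jj - up) := by
          have h0 := psi_add (f+1) cp (2^jj - up)
          rw [show cp + (2^jj - up) = v by omega] at h0
          exact h0
        have hcg : cnt (f+1) cp (2^jj - up) ≤ psi (f+1) (2^jj - up) := by
          apply Cg
          omega
        have hsup' : psi (f+1) (2^jj - up) + psi (f+1) up ≤ psi (f+2) (2^jj) := by
          have := (IH (2^jj) (by omega)).2.2.1 (f+1) (2^jj - up) up (by omega)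
          rw [show (2^jj - up) + up = 2^jj by omega] at this
          exact this
        have hmono : psi f up ≤ psi (f+1) up := psi_mono_e (by omega) up
        rw [hsplit_s, hsplit_pow]
        omega
      · -- case (c) : u ≤ 2^(jj+1), v > 2^jj
        set up := u - 2^jj with hupdef
        set vp := v - 2^jj with hvpdef
        have huple : up ≤ 2^jj := by omega
        have hvple : vp ≤ up := by omega
        have hsplit_u : psi (f+1) u = psi (f+1) (2^jj) + psi f up := by
          have := psi_split (e := f) (m := jj) (r := up) huple
          rw [show 2^jj + up = u by omega] at this
          exact this
        have hsplit_v : psi (f+1) v = psi (f+1) (2^jj) + psi f vp := by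
          have := psi_split (e := f) (m := jj) (r := vp) (by omega)
          rw [show 2^jj + vp = v by omega] at this
          exact this
        have hr : s - 2^(jj+1) = up + vp := by omega
        have hsup' : psi f up + psi f vp ≤ psi (f+1) (up + vp) :=
          (IH (up + vp) (by omega)).2.2.1 f up vp le_rfl
        have hmono : psi (f+1) (2^jj) ≤ psi (f+2) (2^jj) := psi_mono_e (by omega) _
        rw [hsplit_s, hsplit_pow, hr]
        omega
  have compSUP : ∀ e u v, u + v ≤ n → psi e u + psi e v ≤ psi (e+1) (u+v) := by
    intro e u v hn'
    rcases le_total v u with h | h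
    · exact compSUPaux e u v h hn'
    · have := compSUPaux e v u h (by omega)
      rw [add_comm v u] at this
      omega
  -- component F
  have compF : ∀ e m L c, c + L ≤ 2^m → 2^m ≤ n → cnt e (2^m - L) L ≤ cnt e c L := by
    intro e m L c hcL hmn
    rcases Nat.eq_zero_or_pos L with rfl | hL
    · rw [cnt_zero_len, cnt_zero_len]
    rcases eq_or_ne c (2^m - L) with rfl | hne
    · exact le_rfl
    rcases e with _ | e'
    · -- e = 0
      rcases eq_or_ne L (2^m) with rfl | hL2
      · have : c = 0 := by omega
        subst this
        simp
      · have h0 : cnt 0 (2^m - L) L = 0 := cnt0 (by omega)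
        omega
    rcases m with _ | mm
    · -- m = 0 : L = 1, c = 0, 2^0 - L = 0 = c, contradiction with hne
      exfalso
      apply hne
      omega
    have hpow : (2:ℕ)^(mm+1) = 2^mm + 2^mm := by ring
    have hpos : (1:ℕ) ≤ 2^mm := Nat.one_le_two_pow
    rcases lt_or_ge (2^mm) L with hLbig | hLle
    · -- case (ii)
      set D := 2^(mm+1) - L - c with hDdef
      have hDle : D ≤ 2^mm := by omega
      have hid1 : cnt (e'+1) c L = cnt (e'+1) c D + cnt (e'+1) (2^(mm+1) - L) (L - D) := by
        have := cnt_add (e'+1) c D (L - D)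
        rw [show D + (L - D) = L by omega, show c + D = 2^(mm+1) - L by omega] at this
        exact this
      have hid2 : cnt (e'+1) (2^(mm+1) - L) L
          = cnt (e'+1) (2^(mm+1) - L) (L - D) + cnt (e'+1) (2^(mm+1) - D) D := by
        have := cnt_add (e'+1) (2^(mm+1) - L) (L - D) D
        rw [show (L - D) + D = L by omega,
          show 2^(mm+1) - L + (L - D) = 2^(mm+1) - D by omega] at this
        exact this
      have hstrip : cnt (e'+1) (2^(mm+1) - D) D = cnt e' (2^mm - D) D := by
        have := cnt_strip (e := e') (m := mm) (x := 2^mm - D) (y := D) (by omega)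
        rw [show 2^mm + (2^mm - D) = 2^(mm+1) - D by omega] at this
        exact this
      have hmono : cnt e' (2^mm - D) D ≤ cnt (e'+1) (2^mm - D) D := cnt_mono_e (by omega) _ _
      have hF' : cnt (e'+1) (2^mm - D) D ≤ cnt (e'+1) c D :=
        (IH (2^mm) (by omega)).2.2.2 (e'+1) mm D c (by omega) le_rfl
      omega
    rcases le_or_gt (c + L) (2^mm) with hsmall | hstrad
    · -- case (iii-a)
      have hstrip : cnt (e'+1) (2^(mm+1) - L) L = cnt e' (2^mm - L) L := by
        have := cnt_strip (e := e') (m := mm) (x := 2^mm - L) (y := L) (by omega)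
        rw [show 2^mm + (2^mm - L) = 2^(mm+1) - L by omega] at this
        exact this
      have hmono : cnt e' (2^mm - L) L ≤ cnt (e'+1) (2^mm - L) L := cnt_mono_e (by omega) _ _
      have hF' : cnt (e'+1) (2^mm - L) L ≤ cnt (e'+1) c L :=
        (IH (2^mm) (by omega)).2.2.2 (e'+1) mm L c hsmall le_rfl
      omega
    rcases le_or_gt (2^mm) c with hcbig | hcsmall
    · -- case (iii-b)
      have hstripc : cnt (e'+1) c L = cnt e' (c - 2^mm) L := by
        have := cnt_strip (e := e') (m := mm) (x := c - 2^mm) (y := L) (by omega)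
        rw [show 2^mm + (c - 2^mm) = c by omega] at this
        exact this
      have hstrip : cnt (e'+1) (2^(mm+1) - L) L = cnt e' (2^mm - L) L := by
        have := cnt_strip (e := e') (m := mm) (x := 2^mm - L) (y := L) (by omega)
        rw [show 2^mm + (2^mm - L) = 2^(mm+1) - L by omega] at this
        exact this
      have hF' : cnt e' (2^mm - L) L ≤ cnt e' (c - 2^mm) L :=
        (IH (2^mm) (by omega)).2.2.2 e' mm L (c - 2^mm) (by omega) le_rfl
      omega
    · -- case (iii-c)
      set L1 := 2^mm - c with hL1def
      set L2 := c + L - 2^mm with hL2def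
      have hLL : L = L1 + L2 := by omega
      have hid1 : cnt (e'+1) c L = cnt (e'+1) c L1 + cnt (e'+1) (2^mm) L2 := by
        have := cnt_add (e'+1) c L1 L2
        rw [← hLL, show c + L1 = 2^mm by omega] at this
        exact this
      have hstrip2 : cnt (e'+1) (2^mm) L2 = psi e' L2 := cnt_strip0 (by omega)
      have hstrip : cnt (e'+1) (2^(mm+1) - L) L = cnt e' (2^mm - L) L := by
        have := cnt_strip (e := e') (m := mm) (x := 2^mm - L) (y := L) (by omega)
        rw [show 2^mm + (2^mm - L) = 2^(mm+1) - L by omega] at this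
        exact this
      have hid2 : cnt e' (2^mm - L) L = cnt e' (2^mm - L) L2 + cnt e' c L1 := by
        have := cnt_add e' (2^mm - L) L2 L1
        rw [show L2 + L1 = L by omega, show 2^mm - L + L2 = c by omega] at this
        exact this
      have hb1 : cnt e' (2^mm - L) L2 ≤ psi e' L2 := by
        apply Cg
        omega
      have hb2 : cnt e' c L1 ≤ cnt (e'+1) c L1 := cnt_mono_e (by omega) _ _
      omega
  exact ⟨compM, compC1, compSUP, compF⟩

/-- final numeric results -/
theorem psi_superadd {d a b : ℕ} (hb : 1 ≤ b) (hba : b ≤ a) :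
    psi (d+1) (a+b) ≤ psi (d+1) a + psi d b :=
  (pack (a+b)).1 d a b hb hba le_rfl

theorem psi_pow_eq_binom (d k : ℕ) :
    psi d (2^k) = ∑ i ∈ Finset.range (d+1), k.choose i := by
  induction k generalizing d with
  | zero =>
    rw [pow_zero, psi_one]
    rw [Finset.sum_eq_single 0]
    · simp
    · intro i _ hi
      rw [Nat.choose_eq_zero_of_lt (by omega)]
    · intro h
      simp at h
  | succ k IHk =>
    rcases d with _ | d'
    · rw [psi0 (Nat.one_le_two_pow)]
      simp
    · have hsplit : psi (d'+1) (2^(k+1)) = psi (d'+1) (2^k) + psi d' (2^k) := by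
        have := psi_split (e := d') (m := k) (r := 2^k) le_rfl
        rw [show 2^k + 2^k = 2^(k+1) by ring] at this
        exact this
      rw [hsplit, IHk, IHk]
      -- Pascal: ∑_{i<d'+2} C(k+1,i) = ∑_{i<d'+2} C(k,i) + ∑_{i<d'+1} C(k,i)
      rw [Finset.sum_range_succ' (fun i => (k+1).choose i) (d'+1)]
      rw [Finset.sum_range_succ' (fun i => k.choose i) (d'+1)]
      simp only [Nat.choose_succ_succ, Nat.choose_zero_right, Nat.succ_eq_add_one]
      rw [Finset.sum_add_distrib]
      omega


/-! ## Linear algebra part -/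

section LinAlg

open Module LinearMap

variable (n : ℕ)

abbrev Pt := Fin n → ZMod 2
abbrev Fn := (Fin n → ZMod 2) → ZMod 2

/-- monomial function -/
def chi (T : Finset (Fin n)) : Fn n := fun x => ∏ i ∈ T, x i

/-- monomial function cut off outside `S` -/
def eS (S : Finset (Pt n)) (T : Finset (Fin n)) : Fn n :=
  fun x => if x ∈ S then chi n T x else 0

/-- restriction (cutoff) linear map -/
def resMap (S : Finset (Pt n)) : Fn n →ₗ[ZMod 2] Fn n where
  toFun f := fun x => if x ∈ S then f x else 0
  map_add' f g := by funext x; by_cases h : x ∈ S <;> simp [h]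
  map_smul' c f := by funext x; by_cases h : x ∈ S <;> simp [h]

lemma resMap_apply (S : Finset (Pt n)) (f : Fn n) (x : Pt n) :
    resMap n S f x = if x ∈ S then f x else 0 := rfl

/-- span of restricted monomials, `T ⊆ A`, `|T| ≤ d` -/
def W (d : ℕ) (A : Finset (Fin n)) (S : Finset (Pt n)) : Submodule (ZMod 2) (Fn n) :=
  Submodule.span (ZMod 2) ((fun T => eS n S T) '' {T : Finset (Fin n) | T ⊆ A ∧ T.card ≤ d})

lemma resMap_eS {S' S : Finset (Pt n)} (hsub : S' ⊆ S) (T : Finset (Fin n)) :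
    resMap n S' (eS n S T) = eS n S' T := by
  funext x
  rw [resMap_apply]
  unfold eS
  by_cases h : x ∈ S'
  · simp [h, hsub h]
  · simp [h]

lemma rank_decomp (ρ : Fn n →ₗ[ZMod 2] Fn n) (Wp : Submodule (ZMod 2) (Fn n)) :
    finrank (ZMod 2) Wp
      = finrank (ZMod 2) (Wp.map ρ) + finrank (ZMod 2) ↥(Wp ⊓ ker ρ) := by
  have h := LinearMap.finrank_range_add_finrank_ker (ρ.domRestrict Wp)
  rw [LinearMap.range_domRestrict, LinearMap.ker_domRestrict] at h
  rw [← h]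
  congr 1
  have h1 : Submodule.comap Wp.subtype (ker ρ)
      = Submodule.comap Wp.subtype (Wp ⊓ ker ρ) := by
    ext z
    simp only [Submodule.mem_comap, Submodule.mem_inf, Submodule.coe_subtype]
    exact ⟨fun h => ⟨z.2, h⟩, fun h => h.2⟩
  rw [h1]
  exact (Submodule.comapSubtypeEquivOfLe inf_le_left).finrank_eq

lemma W_mono {d d' : ℕ} (hd : d ≤ d') {A A' : Finset (Fin n)} (hA : A ⊆ A')
    (S : Finset (Pt n)) : W n d A S ≤ W n d' A' S := by
  apply Submodule.span_mono
  apply Set.image_mono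
  intro T hT
  exact ⟨hT.1.trans hA, hT.2.trans hd⟩

/-- the key rank recursion -/
lemma rank_step (d : ℕ) (A : Finset (Fin n)) (S : Finset (Pt n)) (i : Fin n)
    (hiA : i ∈ A) (v : ZMod 2) :
    finrank (ZMod 2) (W n (d+1) (A.erase i) (S.filter (fun z => z i = v)))
      + finrank (ZMod 2) (W n d (A.erase i) (S.filter (fun z => z i = v + 1)))
      ≤ finrank (ZMod 2) (W n (d+1) A S) := by
  classical
  set Sv := S.filter (fun z => z i = v) with hSv
  set Sw := S.filter (fun z => z i = v + 1) with hSw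
  have hSvS : Sv ⊆ S := Finset.filter_subset _ _
  have hSwS : Sw ⊆ S := Finset.filter_subset _ _
  set ρ := resMap n Sv with hρ
  rw [rank_decomp n ρ (W n (d+1) A S)]
  gcongr
  · -- image part
    apply Submodule.finrank_mono
    unfold W
    rw [Submodule.map_span]
    apply Submodule.span_le.2
    intro f hf
    obtain ⟨T, hT, rfl⟩ := hf
    apply Submodule.subset_span
    refine ⟨eS n S T, ⟨T, ⟨hT.1.trans (Finset.erase_subset i A), hT.2⟩, rfl⟩, ?_⟩
    exact resMap_eS n hSvS T
  · -- kernel part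
    set g : Finset (Fin n) → Fn n :=
      fun T => eS n S (insert i T) + v • eS n S T with hg
    set idx : Set (Finset (Fin n)) := {T | T ⊆ A.erase i ∧ T.card ≤ d} with hidx
    set U := Submodule.span (ZMod 2) (g '' idx) with hU
    have hgW : ∀ T ∈ idx, g T ∈ W n (d+1) A S := by
      intro T hT
      have hTcard : T.card ≤ d := hT.2
      have hiT : i ∉ T := fun h => (Finset.notMem_erase i A) (hT.1 h)
      apply Submodule.add_mem
      · apply Submodule.subset_span
        refine ⟨insert i T, ⟨?_, ?_⟩, rfl⟩
        · intro j hj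
          rcases Finset.mem_insert.1 hj with rfl | hj
          · exact hiA
          · exact (Finset.erase_subset i A) (hT.1 hj)
        · rw [Finset.card_insert_of_notMem hiT]
          omega
      · apply Submodule.smul_mem
        apply Submodule.subset_span
        exact ⟨T, ⟨hT.1.trans (Finset.erase_subset i A), by omega⟩, rfl⟩
    have hgker : ∀ T ∈ idx, g T ∈ ker ρ := by
      intro T hT
      have hiT : i ∉ T := fun h => (Finset.notMem_erase i A) (hT.1 h)
      rw [LinearMap.mem_ker]
      funext x
      rw [hρ, resMap_apply]
      by_cases hx : x ∈ Sv
      · have hxv : x i = v := (Finset.mem_filter.1 hx).2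
        have hxS : x ∈ S := hSvS hx
        simp only [hg, Pi.add_apply, Pi.smul_apply, if_pos hx]
        unfold eS
        rw [if_pos hxS, if_pos hxS]
        unfold chi
        rw [Finset.prod_insert hiT, hxv]
        rw [smul_eq_mul, Pi.zero_apply]
        have hcalc : ∀ w c : ZMod 2, w * c + w * c = 0 := by decide
        exact hcalc _ _
      · simp [hx]
    have hUle : U ≤ W n (d+1) A S ⊓ ker ρ := by
      rw [hU]
      apply Submodule.span_le.2
      rintro f ⟨T, hT, rfl⟩
      exact ⟨hgW T hT, hgker T hT⟩
    have h1 : finrank (ZMod 2) U ≤ finrank (ZMod 2) ↥(W n (d+1) A S ⊓ ker ρ) :=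
      Submodule.finrank_mono hUle
    -- U surjects onto W d (A.erase i) Sw under resMap Sw
    have h2 : (W n d (A.erase i) Sw) = U.map (resMap n Sw) := by
      rw [hU, Submodule.map_span]
      unfold W
      congr 1
      rw [← Set.image_comp]
      apply Set.image_congr
      intro T hT
      have hiT : i ∉ T := fun h => (Finset.notMem_erase i A) (hT.1 h)
      simp only [Function.comp]
      rw [hg]
      simp only [map_add, map_smul]
      rw [resMap_eS n hSwS, resMap_eS n hSwS]
      funext x
      unfold eS
      by_cases hx : x ∈ Sw
      · have hxv : x i = v + 1 := (Finset.mem_filter.1 hx).2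
        simp only [Pi.add_apply, Pi.smul_apply, if_pos hx]
        unfold chi
        rw [Finset.prod_insert hiT, hxv, smul_eq_mul]
        have hcalc : ∀ w c : ZMod 2, (w + 1) * c + w * c = c := by decide
        rw [hcalc]
      · simp [hx]
    have h3 : finrank (ZMod 2) (W n d (A.erase i) Sw) ≤ finrank (ZMod 2) U := by
      rw [h2]
      exact Submodule.finrank_map_le _ _
    omega

/-- nonzero element gives rank ≥ 1 -/
lemma rank_ge_one (d : ℕ) (A : Finset (Fin n)) (S : Finset (Pt n)) (hne : S.Nonempty) :
    1 ≤ finrank (ZMod 2) (W n d A S) := by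
  obtain ⟨x₀, hx₀⟩ := hne
  have hmem : eS n S ∅ ∈ W n d A S := by
    apply Submodule.subset_span
    exact ⟨∅, ⟨Finset.empty_subset A, by simp⟩, rfl⟩
  have hnz : eS n S ∅ ≠ 0 := by
    intro h
    have := congrFun h x₀
    unfold eS chi at this
    rw [if_pos hx₀] at this
    simp at this
  rw [Nat.one_le_iff_ne_zero]
  intro h0
  have : Nontrivial ↥(W n d A S) := by
    refine ⟨⟨eS n S ∅, hmem⟩, 0, ?_⟩
    intro hcontra
    apply hnz
    exact congrArg Subtype.val hcontra
  rw [← Module.finrank_pos_iff (R := ZMod 2)] at this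
  omega

/-- the main rank bound -/
theorem rank_ge (d : ℕ) (S : Finset (Pt n)) (A : Finset (Fin n))
    (hagree : ∀ x ∈ S, ∀ y ∈ S, ∀ i, i ∉ A → x i = y i) :
    psi d S.card ≤ finrank (ZMod 2) (W n d A S) := by
  classical
  suffices H : ∀ m (d : ℕ) (S : Finset (Pt n)) (A : Finset (Fin n)), S.card = m →
      (∀ x ∈ S, ∀ y ∈ S, ∀ i, i ∉ A → x i = y i) →
      psi d S.card ≤ finrank (ZMod 2) (W n d A S) by
    exact H S.card d S A rfl hagree
  intro m
  induction m using Nat.strong_induction_on with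
  | _ m IHm =>
  intro d S A hcard hagree
  subst hcard
  rcases Nat.eq_zero_or_pos S.card with h0 | hpos
  · rw [h0, psi_zero_m]; omega
  have hne : S.Nonempty := Finset.card_pos.1 hpos
  rcases Nat.lt_or_ge S.card 2 with h1 | h2
  · have : S.card = 1 := by omega
    rw [this, psi_one]
    exact rank_ge_one n d A S hne
  rcases d with _ | d'
  · rw [psi0 (by omega)]
    exact rank_ge_one n 0 A S hne
  -- S.card ≥ 2 and degree = d' + 1
  obtain ⟨x, hx, y, hy, hxy⟩ := Finset.one_lt_card.1 h2
  obtain ⟨i, hi⟩ := Function.ne_iff.1 hxy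
  have hiA : i ∈ A := by
    by_contra hiA
    exact hi (hagree x hx y hy i hiA)
  -- generic inner step for a chosen value v with balanced order
  have key : ∀ v : ZMod 2,
      (S.filter (fun z => z i = v)).Nonempty →
      (S.filter (fun z => z i = v + 1)).Nonempty →
      (S.filter (fun z => z i = v + 1)).card ≤ (S.filter (fun z => z i = v)).card →
      psi (d'+1) S.card ≤ finrank (ZMod 2) (W n (d'+1) A S) := by
    intro v hne1 hne2 hord
    set Sv := S.filter (fun z => z i = v) with hSvdef
    set Sw := S.filter (fun z => z i = v + 1) with hSwdef
    have hcards : Sv.card + Sw.card = S.card := by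
      have hfn := Finset.card_filter_add_card_filter_not (s := S)
        (p := fun z => z i = v)
      have heq : S.filter (fun a => ¬ a i = v) = Sw := by
        apply Finset.filter_congr
        intro z _
        have : ∀ w u : ZMod 2, (¬ w = u) ↔ w = u + 1 := by decide
        exact this _ _
      rw [heq] at hfn
      exact hfn
    have hc1 : 1 ≤ Sv.card := Finset.card_pos.2 hne1
    have hc2 : 1 ≤ Sw.card := Finset.card_pos.2 hne2
    have hlt1 : Sv.card < S.card := by omega
    have hlt2 : Sw.card < S.card := by omega
    have hagree1 : ∀ x' ∈ Sv, ∀ y' ∈ Sv, ∀ j, j ∉ A.erase i → x' j = y' j := by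
      intro x' hx' y' hy' j hj
      rcases eq_or_ne j i with rfl | hji
      · rw [(Finset.mem_filter.1 hx').2, (Finset.mem_filter.1 hy').2]
      · have hjA : j ∉ A := by
          intro hjA
          exact hj (Finset.mem_erase.2 ⟨hji, hjA⟩)
        exact hagree x' (Finset.filter_subset _ _ hx') y' (Finset.filter_subset _ _ hy') j hjA
    have hagree2 : ∀ x' ∈ Sw, ∀ y' ∈ Sw, ∀ j, j ∉ A.erase i → x' j = y' j := by
      intro x' hx' y' hy' j hj
      rcases eq_or_ne j i with rfl | hji
      · rw [(Finset.mem_filter.1 hx').2, (Finset.mem_filter.1 hy').2]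
      · have hjA : j ∉ A := by
          intro hjA
          exact hj (Finset.mem_erase.2 ⟨hji, hjA⟩)
        exact hagree x' (Finset.filter_subset _ _ hx') y' (Finset.filter_subset _ _ hy') j hjA
    have hIH1 := IHm Sv.card hlt1 (d'+1) Sv (A.erase i) rfl hagree1
    have hIH2 := IHm Sw.card hlt2 d' Sw (A.erase i) rfl hagree2
    have hM : psi (d'+1) (Sv.card + Sw.card) ≤ psi (d'+1) Sv.card + psi d' Sw.card :=
      psi_superadd hc2 hord
    have hstep := rank_step n d' A S i hiA v
    calc psi (d'+1) S.card = psi (d'+1) (Sv.card + Sw.card) :=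
          congrArg (psi (d'+1)) hcards.symm
      _ ≤ psi (d'+1) Sv.card + psi d' Sw.card := hM
      _ ≤ finrank (ZMod 2) (W n (d'+1) (A.erase i) Sv)
            + finrank (ZMod 2) (W n d' (A.erase i) Sw) := Nat.add_le_add hIH1 hIH2
      _ ≤ finrank (ZMod 2) (W n (d'+1) A S) := hstep
  rcases le_total (S.filter (fun z => z i = x i + 1)).card (S.filter (fun z => z i = x i)).card
    with hord | hord
  · apply key (x i)
    · exact ⟨x, Finset.mem_filter.2 ⟨hx, rfl⟩⟩
    · refine ⟨y, Finset.mem_filter.2 ⟨hy, ?_⟩⟩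
      have : ∀ w u : ZMod 2, w ≠ u → w = u + 1 := by decide
      exact this _ _ (Ne.symm hi)
    · exact hord
  · apply key (x i + 1)
    · refine ⟨y, Finset.mem_filter.2 ⟨hy, ?_⟩⟩
      have : ∀ w u : ZMod 2, w ≠ u → w = u + 1 := by decide
      exact this _ _ (Ne.symm hi)
    · have hxx : ∀ w : ZMod 2, w + 1 + 1 = w := by decide
      rw [hxx]
      exact ⟨x, Finset.mem_filter.2 ⟨hx, rfl⟩⟩
    · have hxx : ∀ w : ZMod 2, w + 1 + 1 = w := by decide
      rw [hxx]
      exact hord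

end LinAlg

/-! ## Polynomial counting part -/

section Poly

open MvPolynomial Module LinearMap

variable (n : ℕ)

/-- general rank decomposition -/
lemma rank_decomp' {M₁ M₂ : Type*} [AddCommGroup M₁] [Module (ZMod 2) M₁]
    [AddCommGroup M₂] [Module (ZMod 2) M₂]
    (f : M₁ →ₗ[ZMod 2] M₂) (Wp : Submodule (ZMod 2) M₁) [FiniteDimensional (ZMod 2) Wp] :
    finrank (ZMod 2) Wp
      = finrank (ZMod 2) (Wp.map f) + finrank (ZMod 2) ↥(Wp ⊓ ker f) := by
  have h := LinearMap.finrank_range_add_finrank_ker (f.domRestrict Wp)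
  rw [LinearMap.range_domRestrict, LinearMap.ker_domRestrict] at h
  rw [← h]
  congr 1
  have h1 : Submodule.comap Wp.subtype (ker f)
      = Submodule.comap Wp.subtype (Wp ⊓ ker f) := by
    ext z
    simp only [Submodule.mem_comap, Submodule.mem_inf, Submodule.coe_subtype]
    exact ⟨fun h => ⟨z.2, h⟩, fun h => h.2⟩
  rw [h1]
  exact (Submodule.comapSubtypeEquivOfLe inf_le_left).finrank_eq

/-- cardinality of a f.d. space over `ZMod 2` -/
lemma card_mod2 (M : Type*) [AddCommGroup M] [Module (ZMod 2) M]
    [FiniteDimensional (ZMod 2) M] :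
    Nat.card M = 2 ^ finrank (ZMod 2) M := by
  have b := Module.finBasis (ZMod 2) M
  rw [Nat.card_congr b.equivFun.toEquiv]
  rw [Nat.card_pi]
  simp [Nat.card_zmod]

lemma finite_mod2 (M : Type*) [AddCommGroup M] [Module (ZMod 2) M]
    [FiniteDimensional (ZMod 2) M] : Finite M :=
  Finite.of_equiv _ (Module.finBasis (ZMod 2) M).equivFun.toEquiv.symm

/-- evaluation as a linear map -/
noncomputable def Phi : MvPolynomial (Fin n) (ZMod 2) →ₗ[ZMod 2] Fn n where
  toFun p := fun x => eval x p
  map_add' p q := by funext x; simp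
  map_smul' c p := by funext x; simp [smul_eval]

noncomputable def PT (T : Finset (Fin n)) : MvPolynomial (Fin n) (ZMod 2) := ∏ j ∈ T, X j

lemma Phi_PT (T : Finset (Fin n)) : Phi n (PT n T) = chi n T := by
  funext x
  show eval x (∏ j ∈ T, X j) = ∏ i ∈ T, x i
  rw [eval_prod]
  simp

noncomputable def Vsub (d : ℕ) : Submodule (ZMod 2) (MvPolynomial (Fin n) (ZMod 2)) :=
  restrictTotalDegree (Fin n) (ZMod 2) d ⊓ restrictDegree (Fin n) (ZMod 2) 1

lemma mem_Vsub {d : ℕ} {p : MvPolynomial (Fin n) (ZMod 2)} :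
    p ∈ Vsub n d ↔ (p.totalDegree ≤ d ∧ ∀ i, p.degreeOf i ≤ 1) := by
  unfold Vsub
  rw [Submodule.mem_inf, mem_restrictTotalDegree, mem_restrictDegree]
  constructor
  · rintro ⟨h1, h2⟩
    exact ⟨h1, fun i => degreeOf_le_iff.2 fun m hm => h2 m hm i⟩
  · rintro ⟨h1, h2⟩
    exact ⟨h1, fun m hm i => degreeOf_le_iff.1 (h2 i) m hm⟩

lemma PT_mem_Vsub {d : ℕ} (T : Finset (Fin n)) (hT : T.card ≤ d) : PT n T ∈ Vsub n d := by
  rw [mem_Vsub]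
  constructor
  · refine le_trans (totalDegree_finset_prod T _) ?_
    calc ∑ j ∈ T, (X j : MvPolynomial (Fin n) (ZMod 2)).totalDegree
        = ∑ _j ∈ T, 1 := by
          apply Finset.sum_congr rfl
          intro j _
          exact totalDegree_X j
      _ = T.card := by simp
      _ ≤ d := hT
  · intro i
    refine le_trans (degreeOf_prod_le i T _) ?_
    classical
    calc ∑ j ∈ T, (X j : MvPolynomial (Fin n) (ZMod 2)).degreeOf i
        = ∑ j ∈ T, if i = j then 1 else 0 := by
          apply Finset.sum_congr rfl
          intro j _
          exact degreeOf_X i j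
      _ = if i ∈ T then 1 else 0 := Finset.sum_ite_eq T i (fun _ => 1)
      _ ≤ 1 := by split <;> omega

lemma Vsub_le_span (d : ℕ) :
    Vsub n d ≤ Submodule.span (ZMod 2) (Set.range (PT n)) := by
  intro p hp
  rw [← support_sum_monomial_coeff p]
  apply Submodule.sum_mem
  intro v hv
  have hvle : ∀ i, v i ≤ 1 := by
    intro i
    have h2 := ((mem_Vsub n).1 hp).2 i
    exact degreeOf_le_iff.1 h2 v hv
  have hmono : (monomial v (1 : ZMod 2)) = PT n v.support := by
    rw [← prod_X_pow_eq_monomial]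
    apply Finset.prod_congr rfl
    intro j hj
    have h1 : v j = 1 := by
      have := Finsupp.mem_support_iff.1 hj
      have := hvle j
      omega
    rw [h1, pow_one]
  have hsm : (monomial v (coeff v p)) = (coeff v p) • PT n v.support := by
    rw [← hmono, smul_monomial, smul_eq_mul, mul_one]
  rw [hsm]
  exact Submodule.smul_mem _ _ (Submodule.subset_span ⟨v.support, rfl⟩)

lemma Vsub_fd (d : ℕ) : FiniteDimensional (ZMod 2) (Vsub n d) := by
  haveI : Module.Finite (ZMod 2) ↥(Submodule.span (ZMod 2) (Set.range (PT n))) :=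
    Module.Finite.span_of_finite _ (Set.finite_range _)
  exact Submodule.finiteDimensional_of_le (Vsub_le_span n d)

lemma map_Vsub_ge (d : ℕ) (S : Finset (Pt n)) :
    W n d Finset.univ S ≤ (Vsub n d).map ((resMap n S).comp (Phi n)) := by
  unfold W
  apply Submodule.span_le.2
  rintro f ⟨T, ⟨_, hTcard⟩, rfl⟩
  refine ⟨PT n T, PT_mem_Vsub n T hTcard, ?_⟩
  rw [LinearMap.comp_apply, Phi_PT]
  rfl

/-- counting bad polynomials for one `S` -/
lemma bad_bound (d k : ℕ) (S : Finset (Pt n)) (hne : S.Nonempty) (hcard : 2^k ≤ S.card) :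
    Set.ncard {p : MvPolynomial (Fin n) (ZMod 2) |
        p ∈ Vsub n d ∧ ∀ x ∈ S, ∀ y ∈ S, eval x p = eval y p} * 2 ^ (psi d (2^k))
      ≤ 2 * Nat.card (Vsub n d) := by
  classical
  haveI := Vsub_fd n d
  set M : MvPolynomial (Fin n) (ZMod 2) →ₗ[ZMod 2] Fn n := (resMap n S).comp (Phi n) with hM
  set Cs : Submodule (ZMod 2) (Fn n) := Submodule.span (ZMod 2) {eS n S ∅} with hCs
  set U : Submodule (ZMod 2) (MvPolynomial (Fin n) (ZMod 2)) :=
    Vsub n d ⊓ Submodule.comap M Cs with hUdef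
  haveI hUfd : FiniteDimensional (ZMod 2) U :=
    Submodule.finiteDimensional_of_le inf_le_left
  haveI hCfd : FiniteDimensional (ZMod 2) Cs :=
    Module.Finite.span_of_finite _ (Set.finite_singleton _)
  -- Bad ⊆ U
  have hsub : {p : MvPolynomial (Fin n) (ZMod 2) |
      p ∈ Vsub n d ∧ ∀ x ∈ S, ∀ y ∈ S, eval x p = eval y p} ⊆ (U : Set _) := by
    intro p hp
    obtain ⟨hp1, hp2⟩ := hp
    refine ⟨hp1, ?_⟩
    obtain ⟨x₀, hx₀⟩ := hne
    have hMp : M p = (eval x₀ p) • eS n S ∅ := by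
      funext x
      show (if x ∈ S then eval x p else 0) = eval x₀ p * (if x ∈ S then chi n ∅ x else 0)
      by_cases hx : x ∈ S
      · rw [if_pos hx, if_pos hx]
        unfold chi
        rw [Finset.prod_empty, mul_one]
        exact hp2 x hx x₀ hx₀
      · rw [if_neg hx, if_neg hx, mul_zero]
    show M p ∈ Cs
    rw [hMp]
    exact Submodule.smul_mem _ _ (Submodule.subset_span rfl)
  -- rank bounds
  have h1 : finrank (ZMod 2) U
      = finrank (ZMod 2) (U.map M) + finrank (ZMod 2) ↥(U ⊓ ker M) := rank_decomp' M U
  have h2 : finrank (ZMod 2) (U.map M) ≤ 1 := by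
    have hle : U.map M ≤ Cs := by
      refine le_trans (Submodule.map_mono inf_le_right) ?_
      exact Submodule.map_comap_le M Cs
    have hCs1 : finrank (ZMod 2) Cs = 1 := by
      apply finrank_span_singleton
      intro h0
      obtain ⟨x₀, hx₀⟩ := hne
      have := congrFun h0 x₀
      unfold eS chi at this
      rw [if_pos hx₀] at this
      simp at this
    calc finrank (ZMod 2) (U.map M) ≤ finrank (ZMod 2) Cs := Submodule.finrank_mono hle
      _ = 1 := hCs1
  have h3 : finrank (ZMod 2) ↥(U ⊓ ker M) ≤ finrank (ZMod 2) ↥(Vsub n d ⊓ ker M) := by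
    haveI : FiniteDimensional (ZMod 2) ↥(Vsub n d ⊓ ker M) :=
      Submodule.finiteDimensional_of_le inf_le_left
    exact Submodule.finrank_mono (inf_le_inf_right _ inf_le_left)
  have h4 : finrank (ZMod 2) (Vsub n d)
      = finrank (ZMod 2) ((Vsub n d).map M) + finrank (ZMod 2) ↥(Vsub n d ⊓ ker M) :=
    rank_decomp' M (Vsub n d)
  have h5 : psi d (2^k) ≤ finrank (ZMod 2) ((Vsub n d).map M) := by
    haveI : FiniteDimensional (ZMod 2) ((Vsub n d).map M) := Module.Finite.map _ _
    calc psi d (2^k) ≤ psi d S.card := psi_mono_m d hcard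
      _ ≤ finrank (ZMod 2) (W n d Finset.univ S) := by
          apply rank_ge
          intro x _ y _ i hi
          exact absurd (Finset.mem_univ i) hi
      _ ≤ finrank (ZMod 2) ((Vsub n d).map M) :=
          Submodule.finrank_mono (map_Vsub_ge n d S)
  have hrank : finrank (ZMod 2) U + psi d (2^k) ≤ 1 + finrank (ZMod 2) (Vsub n d) := by
    omega
  -- cardinalities
  haveI := finite_mod2 ↥U
  have hcardU : Nat.card ↥U = 2 ^ finrank (ZMod 2) U := card_mod2 ↥U
  have hcardV : Nat.card ↥(Vsub n d) = 2 ^ finrank (ZMod 2) (Vsub n d) := card_mod2 _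
  have hnc : Set.ncard {p : MvPolynomial (Fin n) (ZMod 2) |
      p ∈ Vsub n d ∧ ∀ x ∈ S, ∀ y ∈ S, eval x p = eval y p} ≤ Nat.card ↥U := by
    rw [← Nat.card_coe_set_eq]
    exact Set.ncard_le_ncard hsub (Set.toFinite (U : Set (MvPolynomial (Fin n) (ZMod 2))))
  calc Set.ncard _ * 2 ^ psi d (2^k) ≤ Nat.card ↥U * 2 ^ psi d (2^k) :=
        Nat.mul_le_mul_right _ hnc
    _ = 2 ^ (finrank (ZMod 2) U + psi d (2^k)) := by rw [hcardU, pow_add]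
    _ ≤ 2 ^ (1 + finrank (ZMod 2) (Vsub n d)) := Nat.pow_le_pow_right (by omega) hrank
    _ = 2 * Nat.card ↥(Vsub n d) := by rw [pow_add, pow_one, hcardV]

lemma ncard_iUnion_le_sum {α : Type*} :
    ∀ (N : ℕ) (f : Fin N → Set α), (⋃ j, f j).ncard ≤ ∑ j, (f j).ncard := by
  intro N
  induction N with
  | zero => intro f; simp
  | succ N IH =>
    intro f
    have hdec : (⋃ j, f j) = f 0 ∪ ⋃ j : Fin N, f j.succ := by
      ext x
      simp only [Set.mem_iUnion, Set.mem_union]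
      constructor
      · rintro ⟨j, hj⟩
        rcases Fin.eq_zero_or_eq_succ j with rfl | ⟨j', rfl⟩
        · exact Or.inl hj
        · exact Or.inr ⟨j', hj⟩
      · rintro (h | ⟨j, hj⟩)
        · exact ⟨0, h⟩
        · exact ⟨j.succ, hj⟩
    rw [hdec, Fin.sum_univ_succ]
    refine le_trans (Set.ncard_union_le _ _) ?_
    exact Nat.add_le_add_left (IH _) _

end Poly

end Stmt17


open Stmt17 in
/-- A uniformly random multilinear polynomial of degree `≤ d` over `F_2` is a disperser
(non-constant on the support of every distribution) for any family `X_1, …, X_N` of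
distributions over `{0,1}^n` of min-entropy `≥ k`, with probability at least
`1 − N · 2^{1 − ∑_{i=0}^d C(k,i)}`.  Stated by counting polynomials. -/
theorem stmt17 (n d k N : ℕ) (hn : 1 ≤ n) (hd : 1 ≤ d) (hk : 1 ≤ k)
    (X : Fin N → (Fin n → ZMod 2) → ℝ)
    (hpos : ∀ j x, 0 ≤ X j x)
    (hsum : ∀ j, ∑ x, X j x = 1)
    (hent : ∀ j x, X j x ≤ ((2 : ℝ) ^ k)⁻¹) :
    ((1 : ℝ) - N * (2 : ℝ) ^ ((1 : ℤ) - (∑ i ∈ Finset.range (d + 1), k.choose i : ℕ)))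
        * (Set.ncard {p : MvPolynomial (Fin n) (ZMod 2) |
            p.totalDegree ≤ d ∧ ∀ i, p.degreeOf i ≤ 1} : ℝ)
      ≤ (Set.ncard {p : MvPolynomial (Fin n) (ZMod 2) |
          (p.totalDegree ≤ d ∧ ∀ i, p.degreeOf i ≤ 1) ∧
          ∀ j : Fin N, ∃ x y : Fin n → ZMod 2, X j x ≠ 0 ∧ X j y ≠ 0 ∧
            MvPolynomial.eval x p ≠ MvPolynomial.eval y p} : ℝ) := by
  classical
  set B : ℕ := ∑ i ∈ Finset.range (d + 1), k.choose i with hBdef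
  set Pset : Set (MvPolynomial (Fin n) (ZMod 2)) :=
    {p | p.totalDegree ≤ d ∧ ∀ i, p.degreeOf i ≤ 1} with hPdef
  set Gset : Set (MvPolynomial (Fin n) (ZMod 2)) :=
    {p | (p.totalDegree ≤ d ∧ ∀ i, p.degreeOf i ≤ 1) ∧
      ∀ j : Fin N, ∃ x y : Fin n → ZMod 2, X j x ≠ 0 ∧ X j y ≠ 0 ∧
        MvPolynomial.eval x p ≠ MvPolynomial.eval y p} with hGdef
  have hPV : Pset = (Vsub n d : Set (MvPolynomial (Fin n) (ZMod 2))) := by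
    ext p
    rw [hPdef, Set.mem_setOf_eq, SetLike.mem_coe, mem_Vsub]
  haveI := Vsub_fd n d
  haveI := finite_mod2 ↥(Vsub n d)
  -- the supports
  set Sj : Fin N → Finset (Fin n → ZMod 2) :=
    fun j => Finset.univ.filter (fun x => X j x ≠ 0) with hSjdef
  have hSsum : ∀ j, ∑ x ∈ Sj j, X j x = 1 := by
    intro j
    rw [hSjdef]
    rw [Finset.sum_filter_ne_zero]
    exact hsum j
  have hSne : ∀ j, (Sj j).Nonempty := by
    intro j
    rw [Finset.nonempty_iff_ne_empty]
    intro h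
    have := hSsum j
    rw [h, Finset.sum_empty] at this
    norm_num at this
  have hScard : ∀ j, 2^k ≤ (Sj j).card := by
    intro j
    have hpow : (0:ℝ) < 2^k := by positivity
    have h2 : (1:ℝ) ≤ ((Sj j).card : ℝ) * ((2:ℝ)^k)⁻¹ := by
      rw [← hSsum j]
      calc ∑ x ∈ Sj j, X j x ≤ (Sj j).card • ((2:ℝ)^k)⁻¹ :=
            Finset.sum_le_card_nsmul _ _ _ (fun x _ => hent j x)
        _ = ((Sj j).card : ℝ) * ((2:ℝ)^k)⁻¹ := by rw [nsmul_eq_mul]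
    have h5 := mul_le_mul_of_nonneg_right h2 (le_of_lt hpow)
    rw [one_mul, mul_assoc, inv_mul_cancel₀ (ne_of_gt hpow), mul_one] at h5
    exact_mod_cast h5
  -- bad sets
  set Bad : Fin N → Set (MvPolynomial (Fin n) (ZMod 2)) :=
    fun j => {p | p ∈ Vsub n d ∧
      ∀ x ∈ Sj j, ∀ y ∈ Sj j, MvPolynomial.eval x p = MvPolynomial.eval y p} with hBaddef
  have hBpsi : psi d (2^k) = B := psi_pow_eq_binom d k
  have hBadBound : ∀ j, (Bad j).ncard * 2 ^ B ≤ 2 * Nat.card (Vsub n d) := by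
    intro j
    rw [← hBpsi]
    exact bad_bound n d k (Sj j) (hSne j) (hScard j)
  have hBadsubP : ∀ j, Bad j ⊆ Pset := by
    intro j p hp
    rw [hPV]
    exact hp.1
  have hGsubP : Gset ⊆ Pset := fun p hp => hp.1
  have hcover : Pset ⊆ Gset ∪ ⋃ j, Bad j := by
    intro p hp
    by_cases hg : ∀ j : Fin N, ∃ x y : Fin n → ZMod 2, X j x ≠ 0 ∧ X j y ≠ 0 ∧
        MvPolynomial.eval x p ≠ MvPolynomial.eval y p
    · exact Or.inl ⟨hp, hg⟩
    · right
      push_neg at hg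
      obtain ⟨j, hj⟩ := hg
      refine Set.mem_iUnion.2 ⟨j, ?_, ?_⟩
      · rw [hPV] at hp; exact hp
      · intro x hx y hy
        have hx' : X j x ≠ 0 := (Finset.mem_filter.1 hx).2
        have hy' : X j y ≠ 0 := (Finset.mem_filter.1 hy).2
        exact hj x y hx' hy'
  have hfinP : Pset.Finite := by
    rw [hPV]
    exact Set.toFinite _
  have hcount : Pset.ncard ≤ Gset.ncard + ∑ j, (Bad j).ncard := by
    have hfinU : (Gset ∪ ⋃ j, Bad j).Finite := by
      apply Set.Finite.subset hfinP
      intro p hp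
      rcases hp with hp | hp
      · exact hGsubP hp
      · obtain ⟨j, hj⟩ := Set.mem_iUnion.1 hp
        exact hBadsubP j hj
    have h1 : Pset.ncard ≤ (Gset ∪ ⋃ j, Bad j).ncard := Set.ncard_le_ncard hcover hfinU
    have h2 := Set.ncard_union_le Gset (⋃ j, Bad j)
    have h3 := ncard_iUnion_le_sum N Bad
    omega
  have hPcard : Pset.ncard = Nat.card ↥(Vsub n d) := by
    rw [hPV, ← Nat.card_coe_set_eq]
    rfl
  -- real arithmetic
  have hB1 : 1 ≤ B := by
    rw [← hBpsi]
    exact psi_ge_one Nat.one_le_two_pow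
  set z : ℝ := (2 : ℝ) ^ ((1 : ℤ) - (B:ℕ)) with hzdef
  have hzeq : z = 2 * ((2:ℝ)^(B:ℕ))⁻¹ := by
    rw [hzdef, zpow_sub₀ (two_ne_zero), zpow_one, zpow_natCast, div_eq_mul_inv]
  set cV : ℝ := (Nat.card ↥(Vsub n d) : ℝ) with hcVdef
  have hkey : ∀ j, ((Bad j).ncard : ℝ) ≤ z * cV := by
    intro j
    have h := hBadBound j
    have hc : ((Bad j).ncard : ℝ) * 2^(B:ℕ) ≤ 2 * cV := by
      rw [hcVdef]
      exact_mod_cast h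
    have hpow : (0:ℝ) < 2^(B:ℕ) := by positivity
    rw [hzeq]
    rw [show (2:ℝ) * ((2:ℝ)^(B:ℕ))⁻¹ * cV = 2 * cV / 2^(B:ℕ) by ring]
    rw [le_div_iff₀ hpow]
    exact hc
  have hsumBad : (∑ j, ((Bad j).ncard:ℝ)) ≤ (N:ℝ) * (z * cV) := by
    calc (∑ j, ((Bad j).ncard:ℝ)) ≤ ∑ _j : Fin N, z * cV :=
          Finset.sum_le_sum (fun j _ => hkey j)
      _ = (N:ℝ) * (z * cV) := by
          rw [Finset.sum_const, Finset.card_univ, Fintype.card_fin, nsmul_eq_mul]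
  have hcountR : cV ≤ (Gset.ncard : ℝ) + ∑ j, ((Bad j).ncard:ℝ) := by
    rw [hcVdef, ← hPcard]
    push_cast
    exact_mod_cast hcount
  have hgoal : (1 - (N:ℝ) * z) * cV ≤ (Gset.ncard : ℝ) := by nlinarith [hsumBad, hcountR]
  calc ((1 : ℝ) - N * z) * (Pset.ncard : ℝ) = (1 - (N:ℝ) * z) * cV := by
        rw [hPcard, hcVdef]
    _ ≤ (Gset.ncard : ℝ) := hgoal
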